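/- Let G be a finite group, N a normal subgroup of G, and S a symmetric generating set of G containing the identity (e ∈ S = S⁻¹). If d is the diameter of the Cayley graph of the quotient G/N with respect to the image of S, then S^{2d+1} ∩ N generates N. -/

import Mathlib

open Pointwise

/-- Schreier's lemma: if `S` is a symmetric generating set of the finite group `G`
containing the identity, `N ⊴ G`, and the image of `S` in `G/N` reaches everything in
`d` steps (`d` = diameter of the quotient Cayley graph), then `S^(2d+1) ∩ N` generates `N`. -/
theorem schreier_lemma {G : Type*} [Group G] [Finite G] (N : Subgroup G) [N.Normal]
    (S : Set G) (h1 : (1 : G) ∈ S) (hsymm : S⁻¹ = S)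
    (hgen : Subgroup.closure S = ⊤) (d : ℕ)
    (hd : ((QuotientGroup.mk '' S : Set (G ⧸ N))) ^ d = Set.univ) :
    Subgroup.closure (S ^ (2 * d + 1) ∩ (N : Set G)) = N := by
  set T := Subgroup.closure (S ^ (2 * d + 1) ∩ (N : Set G)) with hT
  have hrep : ∀ g : G, ∃ r ∈ S ^ d, (QuotientGroup.mk r : G ⧸ N) = QuotientGroup.mk g := by
    intro g
    have hmem : (QuotientGroup.mk g : G ⧸ N) ∈
        ((QuotientGroup.mk '' S : Set (G ⧸ N))) ^ d := hd ▸ Set.mem_univ _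
    have him : QuotientGroup.mk '' (S ^ d) = ((QuotientGroup.mk '' S : Set (G ⧸ N))) ^ d :=
      Set.image_pow (QuotientGroup.mk' N) S d
    rw [← him] at hmem
    obtain ⟨r, hr, hr'⟩ := hmem
    exact ⟨r, hr, hr'⟩
  have hSdinv : (S ^ d)⁻¹ = S ^ d := by rw [← inv_pow, hsymm]
  have hbig : S ^ d * S * S ^ d = S ^ (2 * d + 1) := by
    rw [← pow_succ, ← pow_add]
    congr 1
    omega
  have key : ∀ k : ℕ, ∀ n : G, n ∈ S ^ d * S ^ k → n ∈ N → n ∈ T := by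
    intro k
    induction k with
    | zero =>
      intro n hn hnN
      refine Subgroup.subset_closure ⟨?_, hnN⟩
      have hsub : S ^ d * S ^ 0 ⊆ S ^ (2 * d + 1) := by
        rw [pow_zero, mul_one]
        exact Set.pow_subset_pow_right h1 (by omega)
      exact hsub hn
    | succ k ih =>
      intro n hn hnN
      rw [pow_succ'] at hn
      obtain ⟨u, hu, v, hv, rfl⟩ := hn
      obtain ⟨s, hs, m, hm, rfl⟩ := hv
      obtain ⟨r, hr, hrq⟩ := hrep (u * s)
      have hainS : u * s * r⁻¹ ∈ S ^ (2 * d + 1) := by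
        rw [← hbig]
        refine Set.mul_mem_mul (Set.mul_mem_mul hu hs) ?_
        rw [← hSdinv]
        exact Set.inv_mem_inv.2 hr
      have hainN : u * s * r⁻¹ ∈ N := by
        rw [← QuotientGroup.eq_one_iff]
        have : (QuotientGroup.mk (u * s * r⁻¹) : G ⧸ N) =
            QuotientGroup.mk (u * s) * (QuotientGroup.mk r)⁻¹ := by
          simp [QuotientGroup.mk_mul, QuotientGroup.mk_inv]
        rw [this, hrq, mul_inv_cancel]
      have haT : u * s * r⁻¹ ∈ T := Subgroup.subset_closure ⟨hainS, hainN⟩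
      have hrmN : r * m ∈ N := by
        have : r * m = (u * s * r⁻¹)⁻¹ * (u * (s * m)) := by group
        rw [this]
        exact N.mul_mem (N.inv_mem hainN) hnN
      have hrmT : r * m ∈ T := ih (r * m) (Set.mul_mem_mul hr hm) hrmN
      have heq : u * (s * m) = (u * s * r⁻¹) * (r * m) := by group
      show u * (s * m) ∈ T
      rw [heq]
      exact T.mul_mem haT hrmT
  refine le_antisymm ((Subgroup.closure_le N).2 Set.inter_subset_right) ?_
  intro n hn
  have hnsub : n ∈ Submonoid.closure S := by
    have h2 := Subgroup.closure_toSubmonoid S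
    rw [hsymm, Set.union_self, hgen] at h2
    rw [← h2, Subgroup.mem_toSubmonoid]
    trivial
  obtain ⟨l, hl, rfl⟩ := Submonoid.exists_list_of_mem_closure hnsub
  have hlp : ∀ l' : List G, (∀ y ∈ l', y ∈ S) → l'.prod ∈ S ^ l'.length := by
    intro l'
    induction l' with
    | nil => intro _; simp only [List.prod_nil, List.length_nil, pow_zero, Set.mem_one]
    | cons a t iht =>
      intro hmem
      rw [List.prod_cons, List.length_cons, pow_succ']
      exact Set.mul_mem_mul (hmem a List.mem_cons_self)
        (iht fun y hy => hmem y (List.mem_cons_of_mem a hy))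
  have hfin : l.prod ∈ S ^ d * S ^ l.length := by
    simpa using Set.mul_mem_mul (Set.one_mem_pow (n := d) h1) (hlp l hl)
  exact key l.length l.prod hfin hn
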